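/- Let V be a finite set with |V| = n ≥ 2, and let L and L' be symmetric generators of irreducible, transitive continuous-time Markov chains on V (so L = Lᵀ, L(x,y) ≥ 0 for x ≠ y, rows sum to 0, and for all x,y ∈ V there is a bijection φ of V with φ(x) = y and L(a,b) = L(φ(a),φ(b)) for all a,b; similarly for L'). The common stationary distribution is uniform on V. Suppose for some c ∈ (0,1] that c·E'(f,f) ≤ E(f,f) ≤ E'(f,f)/c for all f : V → ℝ, where E(f,f) := (1/(2n))·∑_{u,v} L(u,v)(f(u) − f(v))² and E' is defined analogously with L'. Then the L² mixing times mix⁽²⁾ := inf{t ≥ 0 : max_x (n·∑_y (P_t(x,y) − 1/n)²)^{1/2} ≤ 1/2} (with P_t = exp(tL)) and mix⁽²⁾' (defined analogously with L') satisfy c·mix⁽²⁾ ≤ mix⁽²⁾' ≤ mix⁽²⁾/c. In particular, for transitive chains the L² mixing time is robust under bounded perturbations preserving transitivity. -/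

import Mathlib

open Finset

variable {V : Type*} [Fintype V] [DecidableEq V]

/-- `L` is the generator of a continuous-time Markov chain: nonnegative off-diagonal
entries and rows summing to zero. -/
def IsGenerator (L : Matrix V V ℝ) : Prop :=
  (∀ x y, x ≠ y → 0 ≤ L x y) ∧ (∀ x, ∑ y, L x y = 0)

/-- Irreducibility of the chain with generator `L`: the directed graph of positive
off-diagonal entries is strongly connected. -/
def IsIrreducibleGen (L : Matrix V V ℝ) : Prop :=
  ∀ x y : V, Relation.ReflTransGen (fun a b => a ≠ b ∧ 0 < L a b) x y

/-- Transitivity: for any two states there is a bijection of the state space carrying one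
to the other and preserving the generator. -/
def IsTransitiveGen (L : Matrix V V ℝ) : Prop :=
  ∀ x y : V, ∃ φ : Equiv.Perm V, φ x = y ∧ ∀ a b, L a b = L (φ a) (φ b)

/-- Dirichlet form with respect to the uniform distribution:
`E(f,f) = (1/(2n)) ∑_{u,v} L(u,v)(f(u)−f(v))²`. -/
noncomputable def dirichletUnif (L : Matrix V V ℝ) (f : V → ℝ) : ℝ :=
  (1 / (2 * (Fintype.card V : ℝ))) * ∑ u, ∑ v, L u v * (f u - f v) ^ 2

/-- The `L²` mixing time of the continuous-time chain with generator `L` and uniform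
stationary distribution. -/
noncomputable def l2MixCT (L : Matrix V V ℝ) : ℝ :=
  sInf {t : ℝ | 0 ≤ t ∧ ∀ x : V,
    Real.sqrt ((Fintype.card V : ℝ) *
      ∑ y, ((NormedSpace.exp (t • L)) x y - 1 / (Fintype.card V : ℝ)) ^ 2) ≤ 1 / 2}


open NormedSpace Matrix
set_option maxHeartbeats 2000000
set_option linter.unusedSectionVars false


theorem exp_rowsum (M : Matrix V V ℝ) (h : ∀ x, ∑ y, M x y = 0) (x : V) :
    ∑ y, exp M x y = 1 := by
  letI : SeminormedRing (Matrix V V ℝ) := Matrix.linftyOpSemiNormedRing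
  letI : NormedRing (Matrix V V ℝ) := Matrix.linftyOpNormedRing
  letI : NormedAlgebra ℝ (Matrix V V ℝ) := Matrix.linftyOpNormedAlgebra
  have hM : M *ᵥ (fun _ => (1:ℝ)) = 0 := by
    funext z; simp [Matrix.mulVec, dotProduct, h z]
  have hpow : ∀ n : ℕ, (M ^ n) *ᵥ (fun _ => (1:ℝ)) =
      if n = 0 then (fun _ => (1:ℝ)) else (0 : V → ℝ) := by
    intro n
    induction n with
    | zero => simp
    | succ k ih =>
      rw [pow_succ, ← Matrix.mulVec_mulVec, hM]
      simp
  let T : Matrix V V ℝ →ₗ[ℝ] (V → ℝ) :=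
    { toFun := fun A => A *ᵥ (fun _ => (1:ℝ))
      map_add' := fun A B => Matrix.add_mulVec A B _
      map_smul' := fun r A => Matrix.smul_mulVec r A _ }
  have hsum : Summable fun n : ℕ => ((n.factorial : ℝ)⁻¹) • M ^ n :=
    NormedSpace.expSeries_summable' (𝕂 := ℝ) M
  have key : exp M *ᵥ (fun _ => (1:ℝ)) = fun _ => (1:ℝ) := by
    have h1 : T (exp M) = ∑' n : ℕ, T (((n.factorial : ℝ)⁻¹) • M ^ n) := by
      rw [exp_eq_tsum ℝ]
      exact ((hsum.hasSum.map T T.continuous_of_finiteDimensional).tsum_eq).symm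
    have h2 : ∀ n : ℕ, T (((n.factorial : ℝ)⁻¹) • M ^ n) =
        if n = 0 then (fun _ => (1:ℝ)) else (0 : V → ℝ) := by
      intro n
      simp only [_root_.map_smul, T, LinearMap.coe_mk, AddHom.coe_mk, hpow n]
      rcases Nat.eq_zero_or_pos n with h0 | h0
      · subst h0; simp
      · simp [Nat.pos_iff_ne_zero.mp h0]
    have h3 : T (exp M) = fun _ => (1:ℝ) := by
      rw [h1]
      simp_rw [h2]
      rw [tsum_eq_single 0 (by intro b hb; simp [hb])]
      simp
    exact h3
  have := congrFun key x
  simpa [Matrix.mulVec, dotProduct] using this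

theorem exp_diag_const (L : Matrix V V ℝ)
    (htrans : ∀ x y : V, ∃ φ : Equiv.Perm V, φ x = y ∧ ∀ a b, L a b = L (φ a) (φ b))
    (s : ℝ) (x y : V) : exp (s • L) x x = exp (s • L) y y := by
  letI : SeminormedRing (Matrix V V ℝ) := Matrix.linftyOpSemiNormedRing
  letI : NormedRing (Matrix V V ℝ) := Matrix.linftyOpNormedRing
  letI : NormedAlgebra ℝ (Matrix V V ℝ) := Matrix.linftyOpNormedAlgebra
  obtain ⟨φ, hφ, hL⟩ := htrans x y
  have hsub : L.submatrix φ φ = L := by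
    ext a b; exact (hL a b).symm
  set ψ := Matrix.reindexAlgEquiv ℝ ℝ (φ.symm : V ≃ V) with hψ
  have hψapp : ∀ M : Matrix V V ℝ, ψ M = M.submatrix φ φ := by
    intro M
    rw [hψ, Matrix.reindexAlgEquiv_apply]
    rfl
  have hcont : Continuous ψ := ψ.toLinearMap.continuous_of_finiteDimensional
  letI : NormedAlgebra ℚ (Matrix V V ℝ) := Matrix.linftyOpNormedAlgebra
  have hmap : ψ (exp (s • L)) = exp (ψ (s • L)) :=
    NormedSpace.map_exp (ψ : Matrix V V ℝ ≃ₐ[ℝ] Matrix V V ℝ) hcont _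
  have hψL : ψ (s • L) = s • L := by
    rw [_root_.map_smul, hψapp, hsub]
  have heq : (exp (s • L)).submatrix φ φ = exp (s • L) := by
    rw [← hψapp, hmap, hψL]
  have h2 := congrFun (congrFun heq x) x
  have h3 : exp (s • L) y y = exp (s • L) x x := by simpa [Matrix.submatrix, hφ] using h2
  exact h3.symm

-- PSD trace nonneg
theorem psd_trace_nonneg {M : Matrix V V ℝ} (h : M.PosSemidef) : 0 ≤ M.trace := by
  rw [Matrix.trace]
  apply Finset.sum_nonneg
  intro i _
  have := h.dotProduct_mulVec_nonneg (Pi.single i 1)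
  simpa [dotProduct, Matrix.mulVec, Pi.single_apply, Finset.sum_ite_eq, Pi.star_def] using this

theorem isSymm_psd {M : Matrix V V ℝ} (hs : M.IsSymm)
    (h : ∀ f : V → ℝ, 0 ≤ f ⬝ᵥ (M *ᵥ f)) : M.PosSemidef := by
  refine Matrix.PosSemidef.of_dotProduct_mulVec_nonneg ?_ ?_
  · show Mᴴ = M
    ext i j
    simp only [Matrix.conjTranspose_apply, star_trivial]
    exact (congrFun (congrFun hs j) i).symm
  · intro x
    simpa using h x

-- trace of exp M * D is nonneg for M symm, D psd
theorem trace_exp_mul_psd_nonneg [Nonempty V] (M D : Matrix V V ℝ) (hM : M.IsSymm)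
    (hD : D.PosSemidef) : 0 ≤ (exp M * D).trace := by
  letI : SeminormedRing (Matrix V V ℝ) := Matrix.linftyOpSemiNormedRing
  letI : NormedRing (Matrix V V ℝ) := Matrix.linftyOpNormedRing
  letI : NormedAlgebra ℝ (Matrix V V ℝ) := Matrix.linftyOpNormedAlgebra
  have hhalf : exp ((2:ℝ)⁻¹ • M) * exp ((2:ℝ)⁻¹ • M) = exp M := by
    rw [← Matrix.exp_add_of_commute _ _ (Commute.refl _)]
    congr 1
    rw [← add_smul]
    norm_num
  set P := exp ((2:ℝ)⁻¹ • M) with hP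
  have hPs : P.IsSymm := by
    unfold Matrix.IsSymm
    rw [hP, ← Matrix.exp_transpose, Matrix.transpose_smul, hM]
  have hPt : Pᴴ = P := by
    ext i j; simp only [Matrix.conjTranspose_apply, star_trivial]
    exact (congrFun (congrFun hPs j) i).symm
  have key : (exp M * D).trace = (Pᴴ * D * P).trace := by
    rw [← hhalf, hPt]
    exact (Matrix.trace_mul_cycle P D P).symm
  rw [key]
  exact psd_trace_nonneg (hD.conjTranspose_mul_mul_same P)

section WithNorm
attribute [local instance] Matrix.linftyOpSemiNormedRing Matrix.linftyOpNormedRing Matrix.linftyOpNormedAlgebra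

theorem matpow_hasDerivAt (A D : Matrix V V ℝ) (k : ℕ) (s : ℝ) :
    HasDerivAt (fun r : ℝ => (A + r • D) ^ k)
      (∑ j ∈ Finset.range k, (A + s • D) ^ j * D * (A + s • D) ^ (k - 1 - j)) s := by
  have hbase : HasDerivAt (fun r : ℝ => A + r • D) D s := by
    have := ((hasDerivAt_id s).smul_const D).const_add A
    simp only [id, one_smul] at this
    exact this
  induction k with
  | zero =>
    simp only [pow_zero, Finset.range_zero, Finset.sum_empty]
    exact hasDerivAt_const s (1 : Matrix V V ℝ)
  | succ k ih =>
    have h : HasDerivAt (fun r : ℝ => (A + r • D) ^ k * (A + r • D)) _ s := ih.mul hbase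
    have hrw : (fun r : ℝ => (A + r • D) ^ k * (A + r • D)) =
        (fun r : ℝ => (A + r • D) ^ (k + 1)) := by
      funext r; rw [← pow_succ]
    rw [hrw] at h
    convert h using 1
    rw [Finset.sum_range_succ]
    have h1 : (k + 1) - 1 - k = 0 := by omega
    rw [h1, pow_zero, mul_one, Finset.sum_mul]
    congr 1
    apply Finset.sum_congr rfl
    intro j hj
    have hj' : j < k := Finset.mem_range.mp hj
    have he : (k + 1) - 1 - j = (k - 1 - j) + 1 := by omega
    rw [he, pow_succ, ← mul_assoc]

noncomputable def trCLM : Matrix V V ℝ →L[ℝ] ℝ :=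
  LinearMap.toContinuousLinearMap (Matrix.traceLinearMap V ℝ ℝ)

@[simp] theorem trCLM_apply (M : Matrix V V ℝ) : trCLM M = M.trace := rfl

theorem gk_hasDerivAt (A D : Matrix V V ℝ) (k : ℕ) (s : ℝ) :
    HasDerivAt (fun r : ℝ => ((k.factorial : ℝ))⁻¹ * ((A + r • D) ^ k).trace)
      ((k.factorial : ℝ)⁻¹ * (k * (((A + s • D) ^ (k - 1) * D).trace))) s := by
  have h1 := matpow_hasDerivAt A D k s
  have h2 : HasDerivAt (fun r : ℝ => ((A + r • D) ^ k).trace)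
      ((∑ j ∈ Finset.range k, (A + s • D) ^ j * D * (A + s • D) ^ (k - 1 - j)).trace) s := by
    have := (trCLM (V := V)).hasFDerivAt.comp_hasDerivAt s h1
    exact this
  have h3 : (∑ j ∈ Finset.range k, (A + s • D) ^ j * D * (A + s • D) ^ (k - 1 - j)).trace
      = k * (((A + s • D) ^ (k - 1) * D).trace) := by
    rw [Matrix.trace_sum]
    have : ∀ j ∈ Finset.range k,
        ((A + s • D) ^ j * D * (A + s • D) ^ (k - 1 - j)).trace
          = ((A + s • D) ^ (k - 1) * D).trace := by
      intro j hj
      have hj' : j < k := Finset.mem_range.mp hj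
      rw [Matrix.trace_mul_cycle, ← pow_add]
      have he : k - 1 - j + j = k - 1 := by omega
      rw [he]
    rw [Finset.sum_congr rfl this, Finset.sum_const, Finset.card_range, nsmul_eq_mul]
  rw [h3] at h2
  exact h2.const_mul _

end WithNorm

theorem trace_exp_mono [Nonempty V] (A B : Matrix V V ℝ) (hA : A.IsSymm) (hB : B.IsSymm)
    (h : ∀ f : V → ℝ, f ⬝ᵥ (A *ᵥ f) ≤ f ⬝ᵥ (B *ᵥ f)) :
    (exp A).trace ≤ (exp B).trace := by
  letI : SeminormedRing (Matrix V V ℝ) := Matrix.linftyOpSemiNormedRing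
  letI : NormedRing (Matrix V V ℝ) := Matrix.linftyOpNormedRing
  letI : NormedAlgebra ℝ (Matrix V V ℝ) := Matrix.linftyOpNormedAlgebra
  set D := B - A with hDdef
  have hDs : D.IsSymm := hB.sub hA
  have hD : D.PosSemidef := by
    apply isSymm_psd hDs
    intro f
    have := h f
    rw [hDdef, Matrix.sub_mulVec, dotProduct_sub]
    linarith
  set X : ℝ → Matrix V V ℝ := fun r => A + r • D with hXdef
  have hXs : ∀ r, (X r).IsSymm := fun r => hA.add (hDs.smul r)
  set g : ℕ → ℝ → ℝ := fun k r => ((k.factorial : ℝ))⁻¹ * ((X r) ^ k).trace with hgdef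
  set g' : ℕ → ℝ → ℝ :=
    fun k r => ((k.factorial : ℝ))⁻¹ * (k * (((X r) ^ (k - 1) * D).trace)) with hg'def
  set F : ℝ → ℝ := fun r => (exp (X r)).trace with hFdef
  have hsumX : ∀ r, Summable fun k : ℕ => ((k.factorial : ℝ))⁻¹ • (X r) ^ k :=
    fun r => NormedSpace.expSeries_summable' (𝕂 := ℝ) (X r)
  have Feq : F = fun r => ∑' k : ℕ, g k r := by
    funext r
    rw [hFdef]
    simp only [exp_eq_tsum ℝ]
    calc (∑' k : ℕ, ((k.factorial : ℝ))⁻¹ • (X r) ^ k).trace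
        = trCLM (V := V) (∑' k : ℕ, ((k.factorial : ℝ))⁻¹ • (X r) ^ k) := rfl
      _ = ∑' k : ℕ, trCLM (V := V) (((k.factorial : ℝ))⁻¹ • (X r) ^ k) :=
          (trCLM (V := V)).map_tsum (hsumX r)
      _ = ∑' k : ℕ, g k r := by
          apply tsum_congr
          intro k
          rw [hgdef, _root_.map_smul, trCLM_apply, smul_eq_mul]
  -- the derivative is nonnegative
  have key : ∀ s : ℝ, HasDerivAt F (∑' k : ℕ, g' k s) s ∧ 0 ≤ ∑' k : ℕ, g' k s := by
    intro s
    set R : ℝ := |s| + 1 with hRdef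
    set C : ℝ := ‖A‖ + R * ‖D‖ with hCdef
    have hC0 : 0 ≤ C := by positivity
    set κ : ℝ := @Norm.norm _ ContinuousLinearMap.hasOpNorm (trCLM (V := V)) with hκdef
    set u : ℕ → ℝ := fun k => ((k.factorial : ℝ))⁻¹ * k * (κ * ‖D‖ * C ^ (k - 1)) with hudef
    have hu : Summable u := by
      rw [← summable_nat_add_iff 1]
      have heq : ∀ k : ℕ, u (k + 1) = (κ * ‖D‖) * (C ^ k / (k.factorial : ℝ)) := by
        intro k
        rw [hudef]
        simp only [Nat.factorial_succ, Nat.cast_mul, Nat.cast_add, Nat.cast_one,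
          Nat.add_sub_cancel]
        have hk : ((k.factorial : ℝ)) ≠ 0 := Nat.cast_ne_zero.mpr k.factorial_ne_zero
        field_simp
      simp_rw [heq]
      exact (Real.summable_pow_div_factorial C).mul_left _
    have hXnorm : ∀ r ∈ Set.Ioo (-R) R, ‖X r‖ ≤ C := by
      intro r hr
      rw [hXdef]
      calc ‖A + r • D‖ ≤ ‖A‖ + ‖r • D‖ := norm_add_le _ _
        _ = ‖A‖ + |r| * ‖D‖ := by rw [norm_smul, Real.norm_eq_abs]
        _ ≤ ‖A‖ + R * ‖D‖ := by
            have : |r| ≤ R := by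
              rw [abs_le]; exact ⟨hr.1.le, hr.2.le⟩
            nlinarith [norm_nonneg D]
    have hbound : ∀ k : ℕ, ∀ r ∈ Set.Ioo (-R) R, ‖g' k r‖ ≤ u k := by
      intro k r hr
      rw [hg'def, hudef]
      simp only [Real.norm_eq_abs, abs_mul]
      rw [abs_of_nonneg (by positivity : (0:ℝ) ≤ ((k.factorial : ℝ))⁻¹),
        abs_of_nonneg (by positivity : (0:ℝ) ≤ (k : ℝ))]
      rw [mul_assoc]
      apply mul_le_mul_of_nonneg_left _ (by positivity)
      apply mul_le_mul_of_nonneg_left _ (by positivity)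
      calc |((X r) ^ (k - 1) * D).trace| = ‖trCLM (V := V) ((X r) ^ (k-1) * D)‖ := by
            simp [Real.norm_eq_abs]
        _ ≤ κ * ‖(X r) ^ (k-1) * D‖ := (trCLM (V := V)).le_opNorm _
        _ ≤ κ * (‖(X r) ^ (k-1)‖ * ‖D‖) := by
            apply mul_le_mul_of_nonneg_left (norm_mul_le _ _) (norm_nonneg _)
        _ ≤ κ * (C ^ (k-1) * ‖D‖) := by
            apply mul_le_mul_of_nonneg_left _ (norm_nonneg _)
            apply mul_le_mul_of_nonneg_right _ (norm_nonneg _)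
            calc ‖(X r) ^ (k-1)‖ ≤ ‖X r‖ ^ (k-1) := norm_pow_le _ _
              _ ≤ C ^ (k-1) := pow_le_pow_left₀ (norm_nonneg _) (hXnorm r hr) _
        _ = κ * ‖D‖ * C ^ (k-1) := by ring
    have hg0 : Summable fun k : ℕ => g k s := by
      have h0 := ((hsumX s).hasSum.map (trCLM (V := V)) (trCLM (V := V)).continuous).summable
      have heq : (⇑(trCLM (V := V)) ∘ fun k : ℕ => ((k.factorial : ℝ))⁻¹ • (X s) ^ k)
          = fun k : ℕ => g k s := by
        funext k
        simp only [Function.comp_apply, _root_.map_smul, trCLM_apply, smul_eq_mul, hgdef]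
      rwa [heq] at h0
    have hsmem : s ∈ Set.Ioo (-R) R := by
      constructor
      · rw [hRdef]; nlinarith [abs_nonneg s, neg_abs_le s]
      · rw [hRdef]; nlinarith [le_abs_self s]
    have hderiv : HasDerivAt (fun z => ∑' k : ℕ, g k z) (∑' k : ℕ, g' k s) s := by
      apply hasDerivAt_tsum_of_isPreconnected hu isOpen_Ioo
        (isPreconnected_Ioo) _ hbound hsmem hg0 hsmem
      intro k y _
      exact gk_hasDerivAt A D k y
    have hF : HasDerivAt F (∑' k : ℕ, g' k s) s := by
      rw [Feq]; exact hderiv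
    refine ⟨hF, ?_⟩
    -- identify the derivative as trace (exp (X s) * D)
    have hsa : Summable fun k : ℕ => g' k s := by
      apply Summable.of_norm_bounded hu
      intro k; exact hbound k s hsmem
    have hshift : ∑' k : ℕ, g' k s = ∑' k : ℕ, g' (k + 1) s := by
      rw [hsa.tsum_eq_zero_add]
      simp [hg'def]
    have hterm : ∀ k : ℕ, g' (k + 1) s
        = ((k.factorial : ℝ))⁻¹ * (((X s) ^ k * D).trace) := by
      intro k
      rw [hg'def]
      simp only [Nat.factorial_succ, Nat.cast_mul, Nat.cast_add, Nat.cast_one,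
        Nat.add_sub_cancel]
      have hk : ((k.factorial : ℝ)) ≠ 0 := Nat.cast_ne_zero.mpr k.factorial_ne_zero
      field_simp
    have hval : ∑' k : ℕ, g' k s = (exp (X s) * D).trace := by
      rw [hshift]
      simp_rw [hterm]
      set ρ : Matrix V V ℝ →L[ℝ] ℝ :=
        (trCLM (V := V)).comp
          (LinearMap.toContinuousLinearMap (LinearMap.mulRight ℝ D)) with hρdef
      have hρ : ∀ M : Matrix V V ℝ, ρ M = (M * D).trace := fun M => rfl
      have : ∀ k : ℕ, ((k.factorial : ℝ))⁻¹ * (((X s) ^ k * D).trace)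
          = ρ (((k.factorial : ℝ))⁻¹ • (X s) ^ k) := by
        intro k
        rw [_root_.map_smul, hρ, smul_eq_mul]
      simp_rw [this]
      rw [← ρ.map_tsum (hsumX s), exp_eq_tsum ℝ]
      exact hρ _
    rw [hval]
    exact trace_exp_mul_psd_nonneg (X s) D (hXs s) hD
  have hmono : Monotone F :=
    monotone_of_deriv_nonneg (fun s => ((key s).1).differentiableAt)
      (fun s => by rw [((key s).1).deriv]; exact (key s).2)
  have h01 := hmono (by norm_num : (0:ℝ) ≤ 1)
  have hF0 : F 0 = (exp A).trace := by rw [hFdef]; simp [hXdef]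
  have hF1 : F 1 = (exp B).trace := by rw [hFdef]; simp [hXdef, hDdef]
  rw [hF0, hF1] at h01
  exact h01

theorem exp_sq (L : Matrix V V ℝ) (t : ℝ) :
    exp (t • L) * exp (t • L) = exp ((2 * t) • L) := by
  letI : SeminormedRing (Matrix V V ℝ) := Matrix.linftyOpSemiNormedRing
  letI : NormedRing (Matrix V V ℝ) := Matrix.linftyOpNormedRing
  letI : NormedAlgebra ℝ (Matrix V V ℝ) := Matrix.linftyOpNormedAlgebra
  rw [← Matrix.exp_add_of_commute _ _ (Commute.refl _)]
  congr 1
  rw [← add_smul, two_mul]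

theorem exp_isSymm_aux {M : Matrix V V ℝ} (h : M.IsSymm) : (exp M).IsSymm := by
  unfold Matrix.IsSymm
  rw [← Matrix.exp_transpose, h]


theorem sq_dist_eq (L : Matrix V V ℝ) (hsymm : L.IsSymm) (hrow : ∀ x, ∑ y, L x y = 0)
    (t : ℝ) (x : V) :
    (Fintype.card V : ℝ) * ∑ y, (exp (t • L) x y - 1 / (Fintype.card V : ℝ)) ^ 2
      = (Fintype.card V : ℝ) * (exp ((2 * t) • L) x x) - 1 := by
  have hne : Nonempty V := ⟨x⟩
  set n : ℝ := (Fintype.card V : ℝ) with hn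
  have hn0 : 0 < n := by
    rw [hn]; exact_mod_cast Fintype.card_pos
  set E := exp (t • L) with hE
  have hS : ∑ y, E x y = 1 := exp_rowsum (t • L) (by
    intro z
    simp only [Matrix.smul_apply, smul_eq_mul, ← Finset.mul_sum, hrow z, mul_zero]) x
  have hEs : E.IsSymm := exp_isSymm_aux (by
    unfold Matrix.IsSymm
    rw [Matrix.transpose_smul, hsymm])
  have hS2 : ∑ y, (E x y) ^ 2 = exp ((2 * t) • L) x x := by
    rw [← exp_sq L t, ← hE, Matrix.mul_apply]
    apply Finset.sum_congr rfl
    intro y _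
    have h2 : E y x = E x y := by
      have := congrFun (congrFun hEs x) y
      simpa [Matrix.transpose_apply] using this
    rw [h2]; ring
  have expand : ∑ y, (E x y - 1 / n) ^ 2
      = (∑ y, (E x y) ^ 2) - 2 * (1/n) * (∑ y, E x y) + (Fintype.card V : ℝ) * (1/n)^2 := by
    rw [Finset.sum_congr rfl (fun y _ => by ring :
      ∀ y ∈ Finset.univ, (E x y - 1/n)^2 = (E x y)^2 - 2 * (1/n) * E x y + (1/n)^2)]
    rw [Finset.sum_add_distrib, Finset.sum_sub_distrib, ← Finset.mul_sum, Finset.sum_const,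
      Finset.card_univ, nsmul_eq_mul]
  rw [expand, hS, hS2]
  field_simp
  ring

theorem trace_eq_card_mul_diag (L : Matrix V V ℝ)
    (htrans : ∀ x y : V, ∃ φ : Equiv.Perm V, φ x = y ∧ ∀ a b, L a b = L (φ a) (φ b))
    (s : ℝ) (x : V) :
    (exp (s • L)).trace = (Fintype.card V : ℝ) * exp (s • L) x x := by
  have hdiag : ∀ y : V, exp (s • L) y y = exp (s • L) x x :=
    fun y => exp_diag_const L htrans s y x
  rw [Matrix.trace]
  simp only [Matrix.diag]
  rw [Finset.sum_congr rfl (fun y _ => hdiag y), Finset.sum_const, Finset.card_univ,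
    nsmul_eq_mul]

theorem dirichlet_sum_eq (L : Matrix V V ℝ) (hsymm : L.IsSymm) (hrow : ∀ x, ∑ y, L x y = 0)
    (f : V → ℝ) :
    ∑ u, ∑ v, L u v * (f u - f v) ^ 2 = -2 * (f ⬝ᵥ (L *ᵥ f)) := by
  have hcol : ∀ v, ∑ u, L u v = 0 := by
    intro v
    have : ∀ u, L u v = L v u := by
      intro u
      have := congrFun (congrFun hsymm v) u
      simpa [Matrix.transpose_apply] using this
    rw [Finset.sum_congr rfl (fun u _ => this u)]
    exact hrow v
  have expand : ∀ u v, L u v * (f u - f v)^2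
      = (f u)^2 * L u v - 2 * (f u * (L u v * f v)) + (f v)^2 * L u v := by
    intros; ring
  calc ∑ u, ∑ v, L u v * (f u - f v) ^ 2
      = ∑ u, ∑ v, ((f u)^2 * L u v - 2 * (f u * (L u v * f v)) + (f v)^2 * L u v) := by
        exact Finset.sum_congr rfl fun u _ => Finset.sum_congr rfl fun v _ => expand u v
    _ = (∑ u, ∑ v, (f u)^2 * L u v) - (∑ u, ∑ v, 2 * (f u * (L u v * f v)))
        + (∑ u, ∑ v, (f v)^2 * L u v) := by
        simp [Finset.sum_add_distrib, Finset.sum_sub_distrib]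
    _ = 0 - 2 * (f ⬝ᵥ (L *ᵥ f)) + 0 := by
        have h1 : (∑ u, ∑ v, (f u)^2 * L u v) = 0 :=
          Finset.sum_eq_zero fun u _ => by rw [← Finset.mul_sum, hrow u, mul_zero]
        have h3 : (∑ u : V, ∑ v : V, (f v)^2 * L u v) = 0 := by
          rw [Finset.sum_comm]
          exact Finset.sum_eq_zero fun v _ => by rw [← Finset.mul_sum, hcol v, mul_zero]
        have hT2 : 2 * (f ⬝ᵥ (L *ᵥ f)) = ∑ u, ∑ v, 2 * (f u * (L u v * f v)) := by
          rw [dotProduct, Finset.mul_sum]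
          refine Finset.sum_congr rfl fun u _ => ?_
          rw [Matrix.mulVec, dotProduct, Finset.mul_sum, Finset.mul_sum]
          all_goals exact Finset.sum_congr rfl fun v _ => by ring
        rw [h1, h3, ← hT2]
    _ = -2 * (f ⬝ᵥ (L *ᵥ f)) := by ring

set_option linter.unusedSectionVars false in
theorem mix_transfer (L L' : Matrix V V ℝ) (c : ℝ)
    (hcard : 2 ≤ Fintype.card V)
    (hsymm : L.IsSymm) (hsymm' : L'.IsSymm)
    (hgen : IsGenerator L) (hgen' : IsGenerator L')
    (htrans : IsTransitiveGen L) (htrans' : IsTransitiveGen L')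
    (hc0 : 0 < c) (hc1 : c ≤ 1)
    (hE : ∀ f : V → ℝ, dirichletUnif L f ≤ dirichletUnif L' f / c)
    (t : ℝ) (ht0 : 0 ≤ t)
    (hcond : ∀ x : V, Real.sqrt ((Fintype.card V : ℝ) *
      ∑ y, ((exp (t • L)) x y - 1 / (Fintype.card V : ℝ)) ^ 2) ≤ 1 / 2)
    (x : V) :
    Real.sqrt ((Fintype.card V : ℝ) *
      ∑ y, ((exp ((t / c) • L')) x y - 1 / (Fintype.card V : ℝ)) ^ 2) ≤ 1 / 2 := by
  have hNE : Nonempty V := Fintype.card_pos_iff.mp (by omega)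
  set n : ℝ := (Fintype.card V : ℝ) with hn
  have hn0 : 0 < n := by
    rw [hn]; exact_mod_cast Fintype.card_pos
  -- Dirichlet form identities
  have hq : ∀ f : V → ℝ, f ⬝ᵥ (L *ᵥ f) = -(n * dirichletUnif L f) := by
    intro f
    have h1 := dirichlet_sum_eq L hsymm hgen.2 f
    rw [dirichletUnif, h1]
    field_simp
    rw [hn]
  have hq' : ∀ f : V → ℝ, f ⬝ᵥ (L' *ᵥ f) = -(n * dirichletUnif L' f) := by
    intro f
    have h1 := dirichlet_sum_eq L' hsymm' hgen'.2 f
    rw [dirichletUnif, h1]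
    field_simp
    rw [hn]
  -- quadratic form comparison
  have hquad : ∀ f : V → ℝ,
      f ⬝ᵥ (((2 * (t / c)) • L') *ᵥ f) ≤ f ⬝ᵥ (((2 * t) • L) *ᵥ f) := by
    intro f
    rw [Matrix.smul_mulVec, Matrix.smul_mulVec, dotProduct_smul, dotProduct_smul,
      smul_eq_mul, smul_eq_mul, hq f, hq' f]
    have hEf := hE f
    have ht' : 0 ≤ t / c := div_nonneg ht0 hc0.le
    have h3 : t * dirichletUnif L f ≤ t * (dirichletUnif L' f / c) :=
      mul_le_mul_of_nonneg_left hEf ht0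
    have h4 : t * (dirichletUnif L' f / c) = (t / c) * dirichletUnif L' f := by
      field_simp
    nlinarith [hn0]
  -- trace comparison
  have htr : (exp ((2 * (t / c)) • L')).trace ≤ (exp ((2 * t) • L)).trace :=
    trace_exp_mono _ _ (by rw [Matrix.IsSymm, Matrix.transpose_smul, hsymm'])
      (by rw [Matrix.IsSymm, Matrix.transpose_smul, hsymm]) hquad
  -- translate to the L² distances
  have hid' : n * ∑ y, ((exp ((t / c) • L')) x y - 1 / n) ^ 2
      = (exp ((2 * (t / c)) • L')).trace - 1 := by
    rw [sq_dist_eq L' hsymm' hgen'.2 (t / c) x,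
      trace_eq_card_mul_diag L' htrans' (2 * (t / c)) x]
  have hid : n * ∑ y, ((exp (t • L)) x y - 1 / n) ^ 2
      = (exp ((2 * t) • L)).trace - 1 := by
    rw [sq_dist_eq L hsymm hgen.2 t x, trace_eq_card_mul_diag L htrans (2 * t) x]
  have hle : n * ∑ y, ((exp ((t / c) • L')) x y - 1 / n) ^ 2
      ≤ n * ∑ y, ((exp (t • L)) x y - 1 / n) ^ 2 := by
    rw [hid, hid']
    linarith
  calc Real.sqrt (n * ∑ y, ((exp ((t / c) • L')) x y - 1 / n) ^ 2)
      ≤ Real.sqrt (n * ∑ y, ((exp (t • L)) x y - 1 / n) ^ 2) := Real.sqrt_le_sqrt hle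
    _ ≤ 1 / 2 := hcond x

/-- For transitive reversible chains, the `L²` mixing time is robust under bounded
perturbations of the Dirichlet form which preserve transitivity. -/
theorem transitive_l2_mixing_robust (L L' : Matrix V V ℝ) (c : ℝ)
    (hcard : 2 ≤ Fintype.card V)
    (hsymm : L.IsSymm) (hsymm' : L'.IsSymm)
    (hgen : IsGenerator L) (hgen' : IsGenerator L')
    (hirr : IsIrreducibleGen L) (hirr' : IsIrreducibleGen L')
    (htrans : IsTransitiveGen L) (htrans' : IsTransitiveGen L')
    (hc0 : 0 < c) (hc1 : c ≤ 1)
    (hEcomp : ∀ f : V → ℝ,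
      c * dirichletUnif L' f ≤ dirichletUnif L f ∧
      dirichletUnif L f ≤ dirichletUnif L' f / c) :
    c * l2MixCT L ≤ l2MixCT L' ∧ l2MixCT L' ≤ l2MixCT L / c := by
  classical
  set S : Set ℝ := {t : ℝ | 0 ≤ t ∧ ∀ x : V,
    Real.sqrt ((Fintype.card V : ℝ) *
      ∑ y, ((NormedSpace.exp (t • L)) x y - 1 / (Fintype.card V : ℝ)) ^ 2) ≤ 1 / 2} with hS
  set S' : Set ℝ := {t : ℝ | 0 ≤ t ∧ ∀ x : V,
    Real.sqrt ((Fintype.card V : ℝ) *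
      ∑ y, ((NormedSpace.exp (t • L')) x y - 1 / (Fintype.card V : ℝ)) ^ 2) ≤ 1 / 2} with hS'
  have hLdef : l2MixCT L = sInf S := rfl
  have hLdef' : l2MixCT L' = sInf S' := rfl
  have hE1 : ∀ f : V → ℝ, dirichletUnif L f ≤ dirichletUnif L' f / c := fun f => (hEcomp f).2
  have hE2 : ∀ f : V → ℝ, dirichletUnif L' f ≤ dirichletUnif L f / c := by
    intro f
    have := (hEcomp f).1
    rw [le_div_iff₀ hc0]
    linarith [(hEcomp f).1]
  have hfwd : ∀ t ∈ S, t / c ∈ S' := by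
    intro t ht
    exact ⟨div_nonneg ht.1 hc0.le,
      mix_transfer L L' c hcard hsymm hsymm' hgen hgen' htrans htrans' hc0 hc1 hE1 t ht.1 ht.2⟩
  have hbwd : ∀ t ∈ S', t / c ∈ S := by
    intro t ht
    exact ⟨div_nonneg ht.1 hc0.le,
      mix_transfer L' L c hcard hsymm' hsymm hgen' hgen htrans' htrans hc0 hc1 hE2 t ht.1 ht.2⟩
  have hbddS : BddBelow S := ⟨0, fun x hx => hx.1⟩
  have hbddS' : BddBelow S' := ⟨0, fun x hx => hx.1⟩
  rcases S.eq_empty_or_nonempty with hemp | ⟨t0, ht0⟩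
  · have hemp' : S' = ∅ := by
      by_contra h
      obtain ⟨t', ht'⟩ := Set.nonempty_iff_ne_empty.mpr h
      have := hbwd t' ht'
      rw [hemp] at this
      exact this
    rw [hLdef, hLdef', hemp, hemp', Real.sInf_empty]
    constructor
    · simp
    · simp [le_div_iff₀ hc0]
  · have hne' : S'.Nonempty := ⟨t0 / c, hfwd t0 ht0⟩
    constructor
    · rw [hLdef, hLdef']
      apply le_csInf hne'
      intro t' ht'
      have h1 : sInf S ≤ t' / c := csInf_le hbddS (hbwd t' ht')
      calc c * sInf S ≤ c * (t' / c) := mul_le_mul_of_nonneg_left h1 hc0.le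
        _ = t' := by field_simp
    · rw [hLdef, hLdef', le_div_iff₀ hc0]
      apply le_csInf ⟨t0, ht0⟩
      intro t ht
      have h1 : sInf S' ≤ t / c := csInf_le hbddS' (hfwd t ht)
      calc sInf S' * c ≤ (t / c) * c := mul_le_mul_of_nonneg_right h1 hc0.le
        _ = t := by field_simp
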